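/- arXiv:2303.14658 — 2 statements merged into one kernel-verified Lean document; each statement's English description precedes it below -/
import Mathlib

section
/- Suppose the negated excess loss is (ν², α)-sub-Gamma under P_W ⊗ μ for some ν, α > 0, i.e. log ∫ exp(λ·(R − r)) d(P_W ⊗ μ) ≤ ν²λ²/(2(1 − αλ)) for every λ with 0 < λ < 1/α, and suppose R = ∫ r d(P_W ⊗ μ) > 0. Then for every η with 0 < η ≤ R/(ν² + αR) (note R/(ν² + αR) < 1/α), the (η, 1/2)-central condition holds, i.e. log ∫ exp(−η·r) d(P_W ⊗ μ) ≤ −(η/2)·R, and consequently gen ≤ R̂ + (2/(η·n)) ∑_{i=1}^n I(W;Z_i). -/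
open MeasureTheory Real

/-- Real-valued Kullback–Leibler divergence `D(P‖Q)`,
the integral of the log-likelihood ratio with respect to `P`. -/
noncomputable def klReal {α : Type*} [MeasurableSpace α] (P Q : Measure α) : ℝ :=
  ∫ x, llr P Q x ∂P

variable {W Z : Type*} [MeasurableSpace W] [MeasurableSpace Z]

/-- Population risk `L(w) = ∫ ℓ(w,z) dμ(z)`. -/
noncomputable def popRisk (μ : Measure Z) (ℓ : W × Z → ℝ) (w : W) : ℝ :=
  ∫ z, ℓ (w, z) ∂μ

/-- Empirical risk `L̂(w,s) = (1/n) ∑ i, ℓ(w, s i)`. -/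
noncomputable def empRisk (n : ℕ) (ℓ : W × Z → ℝ) (w : W) (s : Fin n → Z) : ℝ :=
  (1 / (n : ℝ)) * ∑ i, ℓ (w, s i)

/-- Expected generalization error `gen = E_P[L(W) − L̂(W,S_n)]`. -/
noncomputable def genErr (μ : Measure Z) (n : ℕ) (P : Measure (W × (Fin n → Z)))
    (ℓ : W × Z → ℝ) : ℝ :=
  ∫ p, (popRisk μ ℓ p.1 - empRisk n ℓ p.1 p.2) ∂P

/-- Expected empirical excess risk `R̂ = E_P[L̂(W,S_n) − L̂(w*,S_n)]`. -/
noncomputable def empExcess (n : ℕ) (P : Measure (W × (Fin n → Z)))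
    (ℓ : W × Z → ℝ) (wstar : W) : ℝ :=
  ∫ p, (empRisk n ℓ p.1 p.2 - empRisk n ℓ wstar p.2) ∂P

/-- Expected excess risk `R = ∫ r d(P_W ⊗ μ)` where `r(w,z) = ℓ(w,z) − ℓ(w*,z)`. -/
noncomputable def excessRisk (μ : Measure Z) {n : ℕ} (P : Measure (W × (Fin n → Z)))
    (ℓ : W × Z → ℝ) (wstar : W) : ℝ :=
  ∫ p, (ℓ p - ℓ (wstar, p.2)) ∂((P.map Prod.fst).prod μ)

/-- Joint law `P_i` of `(W, Z_i)`: the pushforward of `P` under `(w,z) ↦ (w, z_i)`. -/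
noncomputable def jointLaw {n : ℕ} (P : Measure (W × (Fin n → Z))) (i : Fin n) :
    Measure (W × Z) :=
  P.map fun p => (p.1, p.2 i)

/-- Mutual information `I(W;Z_i) = D(P_i ‖ P_W ⊗ μ)`. -/
noncomputable def mutInfo (μ : Measure Z) {n : ℕ} (P : Measure (W × (Fin n → Z)))
    (i : Fin n) : ℝ :=
  klReal (jointLaw P i) ((P.map Prod.fst).prod μ)

lemma klReal_nonneg {α : Type*} [MeasurableSpace α] (P Q : Measure α)
    [IsProbabilityMeasure P] [IsProbabilityMeasure Q]
    (h : P ≪ Q) (hint : Integrable (llr P Q) P) : 0 ≤ klReal P Q := by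
  have hexp : Integrable (fun x => Real.exp (-llr P Q x)) P := by
    rw [integrable_congr (exp_neg_llr h)]
    exact Measure.integrable_toReal_rnDeriv
  have hjen : Real.exp (∫ x, -llr P Q x ∂P) ≤ ∫ x, Real.exp (-llr P Q x) ∂P :=
    convexOn_exp.map_integral_le continuous_exp.continuousOn isClosed_univ
      (Filter.Eventually.of_forall fun x => Set.mem_univ _) hint.neg hexp
  have hle1 : ∫ x, Real.exp (-llr P Q x) ∂P ≤ 1 := by
    rw [integral_congr_ae (exp_neg_llr h)]
    calc ∫ x, (Q.rnDeriv P x).toReal ∂P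
        = ∫ x in Set.univ, (Q.rnDeriv P x).toReal ∂P := by rw [setIntegral_univ]
      _ ≤ (Q Set.univ).toReal := Measure.setIntegral_toReal_rnDeriv_le (by simp)
      _ = 1 := by simp
  have h2 : Real.exp (-∫ x, llr P Q x ∂P) ≤ 1 := by
    rw [← integral_neg]; exact hjen.trans hle1
  have := Real.exp_le_one_iff.mp h2
  unfold klReal; linarith

lemma donsker_varadhan {α : Type*} [MeasurableSpace α] (P Q : Measure α)
    [IsProbabilityMeasure P] [IsProbabilityMeasure Q] (hPQ : P ≪ Q) {f : α → ℝ}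
    (hfP : Integrable f P) (hllr : Integrable (llr P Q) P)
    (hfQ : Integrable (fun x => Real.exp (f x)) Q) :
    ∫ x, f x ∂P ≤ klReal P Q + Real.log (∫ x, Real.exp (f x) ∂Q) := by
  haveI := isProbabilityMeasure_tilted hfQ
  have hPt : P ≪ Q.tilted f := hPQ.trans (absolutelyContinuous_tilted hfQ)
  have h0 : 0 ≤ ∫ x, llr P (Q.tilted f) x ∂P :=
    klReal_nonneg P (Q.tilted f) hPt (integrable_llr_tilted_right hPQ hfP hllr hfQ)
  rw [integral_llr_tilted_right hPQ hfP hfQ hllr] at h0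
  unfold klReal; linarith

lemma map_eval_pi {Z : Type*} [MeasurableSpace Z] (μ : Measure Z) [IsProbabilityMeasure μ]
    {n : ℕ} (i : Fin n) :
    (Measure.pi fun _ : Fin n => μ).map (Function.eval i) = μ := by
  ext s hs
  rw [Measure.map_apply (measurable_pi_apply i) hs, Set.eval_preimage, Measure.pi_pi,
    Fintype.prod_eq_single i (fun j hj => by simp [Function.update_of_ne hj])]
  simp

lemma integral_comp_snd {W Z : Type*} [MeasurableSpace W] [MeasurableSpace Z]
    {ρ : Measure (W × Z)} {μ : Measure Z} (h : ρ.map Prod.snd = μ) {g : Z → ℝ}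
    (hg : Measurable g) : ∫ p, g p.2 ∂ρ = ∫ z, g z ∂μ := by
  rw [← h]
  exact (integral_map measurable_snd.aemeasurable hg.aestronglyMeasurable).symm

lemma integrable_comp_snd {W Z : Type*} [MeasurableSpace W] [MeasurableSpace Z]
    {ρ : Measure (W × Z)} {μ : Measure Z} (h : ρ.map Prod.snd = μ) {g : Z → ℝ}
    (hg : Measurable g) (hgi : Integrable g μ) : Integrable (fun p => g p.2) ρ := by
  rw [← h] at hgi
  simpa [Function.comp_def] using
    (integrable_map_measure hg.aestronglyMeasurable measurable_snd.aemeasurable).mp hgi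

theorem subGamma_central_condition
    (μ : Measure Z) [IsProbabilityMeasure μ] (n : ℕ) (hn : 0 < n)
    (P : Measure (W × (Fin n → Z))) [IsProbabilityMeasure P]
    (hmarg : P.map Prod.snd = Measure.pi fun _ : Fin n => μ)
    (ℓ : W × Z → ℝ) (hℓ : Measurable ℓ) (wstar : W)
    (hint : Integrable ℓ ((P.map Prod.fst).prod μ))
    (hinti : ∀ i : Fin n, Integrable ℓ (jointLaw P i))
    (hintw : Integrable (fun z => ℓ (wstar, z)) μ)
    (hac : ∀ i : Fin n, jointLaw P i ≪ (P.map Prod.fst).prod μ)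
    (hIfin : ∀ i : Fin n, Integrable (llr (jointLaw P i) ((P.map Prod.fst).prod μ))
      (jointLaw P i))
    (ν α : ℝ) (hν : 0 < ν) (hα : 0 < α)
    (hR : 0 < excessRisk μ P ℓ wstar)
    (hsubInt : ∀ lam : ℝ, 0 < lam → lam < 1 / α →
      Integrable
        (fun p => Real.exp (lam * (excessRisk μ P ℓ wstar - (ℓ p - ℓ (wstar, p.2)))))
        ((P.map Prod.fst).prod μ))
    (hsub : ∀ lam : ℝ, 0 < lam → lam < 1 / α →
      Real.log (∫ p, Real.exp (lam * (excessRisk μ P ℓ wstar - (ℓ p - ℓ (wstar, p.2))))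
          ∂((P.map Prod.fst).prod μ)) ≤ ν ^ 2 * lam ^ 2 / (2 * (1 - α * lam))) :
    ∀ η : ℝ, 0 < η →
      η ≤ excessRisk μ P ℓ wstar / (ν ^ 2 + α * excessRisk μ P ℓ wstar) →
      Real.log (∫ p, Real.exp (-η * (ℓ p - ℓ (wstar, p.2))) ∂((P.map Prod.fst).prod μ)) ≤
          -(η / 2) * excessRisk μ P ℓ wstar ∧
      genErr μ n P ℓ ≤
        empExcess n P ℓ wstar + (2 / (η * (n : ℝ))) * ∑ i : Fin n, mutInfo μ P i := by
  intro η hη0 hηle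
  -- notation
  set Q : Measure (W × Z) := (P.map Prod.fst).prod μ with hQdef
  set R : ℝ := excessRisk μ P ℓ wstar with hRdef
  haveI hPfst : IsProbabilityMeasure (P.map (Prod.fst : W × (Fin n → Z) → W)) :=
    Measure.isProbabilityMeasure_map measurable_fst.aemeasurable
  haveI : IsProbabilityMeasure Q := by rw [hQdef]; infer_instance
  have hn' : (0 : ℝ) < n := Nat.cast_pos.mpr hn
  have hνR : 0 < ν ^ 2 + α * R := by positivity
  have hηα : η < 1 / α := by
    refine lt_of_le_of_lt hηle ?_
    rw [div_lt_div_iff₀ hνR hα]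
    nlinarith [sq_nonneg ν]
  have h1αη : 0 < 1 - α * η := by
    have : η * α < 1 := (lt_div_iff₀ hα).mp hηα
    linarith
  have hηR : η * (ν ^ 2 + α * R) ≤ R := (le_div_iff₀ hνR).mp hηle
  -- measurability facts
  have hgmeas : Measurable fun z => ℓ (wstar, z) := hℓ.comp measurable_prodMk_left
  have hrmeas : Measurable fun p : W × Z => ℓ p - ℓ (wstar, p.2) :=
    hℓ.sub (hgmeas.comp measurable_snd)
  -- part 1 : central condition
  have hintexp := hsubInt η hη0 hηα
  have hsubη := hsub η hη0 hηα
  have hfun : (fun p : W × Z => Real.exp (-η * (ℓ p - ℓ (wstar, p.2))))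
      = fun p => Real.exp (-(η * R)) * Real.exp (η * (R - (ℓ p - ℓ (wstar, p.2)))) := by
    funext p; rw [← Real.exp_add]; ring_nf
  have hexpint' : Integrable (fun p : W × Z => Real.exp (-η * (ℓ p - ℓ (wstar, p.2)))) Q := by
    rw [hfun]; exact hintexp.const_mul _
  have hposA : 0 < ∫ p, Real.exp (η * (R - (ℓ p - ℓ (wstar, p.2)))) ∂Q :=
    integral_exp_pos hintexp
  have hlogeq : Real.log (∫ p, Real.exp (-η * (ℓ p - ℓ (wstar, p.2))) ∂Q)
      = Real.log (∫ p, Real.exp (η * (R - (ℓ p - ℓ (wstar, p.2)))) ∂Q) - η * R := by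
    rw [hfun, integral_const_mul, Real.log_mul (Real.exp_ne_zero _) hposA.ne', Real.log_exp]
    ring
  have hb : ν ^ 2 * η ^ 2 / (2 * (1 - α * η)) ≤ η * R / 2 := by
    rw [div_le_div_iff₀ (by positivity) two_pos]
    nlinarith [mul_le_mul_of_nonneg_left hηR hη0.le]
  have hcc : Real.log (∫ p, Real.exp (-η * (ℓ p - ℓ (wstar, p.2))) ∂Q)
      ≤ -(η / 2) * R := by
    rw [hlogeq]
    have := hsubη
    linarith
  refine ⟨hcc, ?_⟩
  -- marginal facts
  have hev : ∀ i : Fin n, Measurable fun p : W × (Fin n → Z) => p.2 i := fun i =>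
    (measurable_pi_apply i).comp measurable_snd
  have hmeasi : ∀ i : Fin n, Measurable fun p : W × (Fin n → Z) => (p.1, p.2 i) :=
    fun i => measurable_fst.prodMk (hev i)
  haveI hPi : ∀ i : Fin n, IsProbabilityMeasure (jointLaw P i) := fun i =>
    Measure.isProbabilityMeasure_map (hmeasi i).aemeasurable
  have hPsnd_i : ∀ i : Fin n, P.map (fun p => p.2 i) = μ := by
    intro i
    have : (fun p : W × (Fin n → Z) => p.2 i) = Function.eval i ∘ Prod.snd := rfl
    rw [this, ← Measure.map_map (measurable_pi_apply i) measurable_snd, hmarg, map_eval_pi]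
  have hjointsnd : ∀ i : Fin n, (jointLaw P i).map Prod.snd = μ := by
    intro i
    rw [jointLaw, Measure.map_map measurable_snd (hmeasi i)]
    exact hPsnd_i i
  have hQsnd : Q.map Prod.snd = μ := by
    rw [hQdef, Measure.map_snd_prod, measure_univ, one_smul]
  set Lstar : ℝ := ∫ z, ℓ (wstar, z) ∂μ with hLstardef
  -- integral transfers
  have hint_i : ∀ i : Fin n, ∫ p, ℓ (p.1, p.2 i) ∂P = ∫ q, ℓ q ∂(jointLaw P i) := fun i =>
    (integral_map (hmeasi i).aemeasurable hℓ.aestronglyMeasurable).symm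
  have hinti' : ∀ i : Fin n, Integrable (fun p => ℓ (p.1, p.2 i)) P := fun i => by
    simpa [Function.comp_def] using
      (integrable_map_measure hℓ.aestronglyMeasurable (hmeasi i).aemeasurable).mp (hinti i)
  have hintw_i : ∀ i : Fin n, Integrable (fun p : W × (Fin n → Z) => ℓ (wstar, p.2 i)) P := by
    intro i
    have := hintw
    rw [← hPsnd_i i] at this
    simpa [Function.comp_def] using
      (integrable_map_measure hgmeas.aestronglyMeasurable
        (hev i).aemeasurable).mp this
  have hstar_i : ∀ i : Fin n, ∫ p, ℓ (wstar, p.2 i) ∂P = Lstar := by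
    intro i
    rw [hLstardef, ← hPsnd_i i]
    exact (integral_map (hev i).aemeasurable
      hgmeas.aestronglyMeasurable).symm
  -- population risk
  have hpopInt : Integrable (popRisk μ ℓ) (P.map Prod.fst) := hint.integral_prod_left
  have hintpop : Integrable (fun p : W × (Fin n → Z) => popRisk μ ℓ p.1) P := by
    simpa [Function.comp_def] using
      (integrable_map_measure hpopInt.1 measurable_fst.aemeasurable).mp hpopInt
  have hpop_eq : ∫ p, popRisk μ ℓ p.1 ∂P = ∫ q, ℓ q ∂Q := by
    rw [hQdef, integral_prod ℓ hint]
    exact (integral_map measurable_fst.aemeasurable hpopInt.1).symm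
  -- empirical risk
  set A : Fin n → ℝ := fun i => ∫ q, ℓ q ∂(jointLaw P i) with hAdef
  have hintemp : Integrable (fun p : W × (Fin n → Z) => empRisk n ℓ p.1 p.2) P := by
    unfold empRisk
    exact (integrable_finset_sum _ fun i _ => hinti' i).const_mul _
  have hemp_eq : ∫ p, empRisk n ℓ p.1 p.2 ∂P = (1 / (n : ℝ)) * ∑ i, A i := by
    unfold empRisk
    rw [integral_const_mul, integral_finset_sum _ fun i _ => hinti' i]
    congr 1
    exact Finset.sum_congr rfl fun i _ => hint_i i
  have hintempw : Integrable (fun p : W × (Fin n → Z) => empRisk n ℓ wstar p.2) P := by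
    unfold empRisk
    exact (integrable_finset_sum _ fun i _ => hintw_i i).const_mul _
  have hempw_eq : ∫ p, empRisk n ℓ wstar p.2 ∂P = Lstar := by
    unfold empRisk
    rw [integral_const_mul, integral_finset_sum _ fun i _ => hintw_i i]
    rw [Finset.sum_congr rfl fun i _ => hstar_i i, Finset.sum_const, Finset.card_univ,
      Fintype.card_fin, nsmul_eq_mul]
    field_simp
  -- identities for genErr, empExcess, R
  have hgen : genErr μ n P ℓ = ∫ q, ℓ q ∂Q - (1 / (n : ℝ)) * ∑ i, A i := by
    unfold genErr
    rw [integral_sub hintpop hintemp, hpop_eq, hemp_eq]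
  have hempEx : empExcess n P ℓ wstar = (1 / (n : ℝ)) * ∑ i, A i - Lstar := by
    unfold empExcess
    rw [integral_sub hintemp hintempw, hemp_eq, hempw_eq]
  have hQw : Integrable (fun p : W × Z => ℓ (wstar, p.2)) Q :=
    integrable_comp_snd hQsnd hgmeas hintw
  have hRval : R = ∫ q, ℓ q ∂Q - Lstar := by
    rw [hRdef]
    unfold excessRisk
    rw [integral_sub hint hQw, integral_comp_snd hQsnd hgmeas]
  -- per-i Donsker-Varadhan
  have hper : ∀ i : Fin n, η / 2 * R - mutInfo μ P i ≤ η * (A i - Lstar) := by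
    intro i
    have hjw : Integrable (fun q : W × Z => ℓ (wstar, q.2)) (jointLaw P i) :=
      integrable_comp_snd (hjointsnd i) hgmeas hintw
    have hfP : Integrable (fun q : W × Z => -η * (ℓ q - ℓ (wstar, q.2))) (jointLaw P i) :=
      ((hinti i).sub hjw).const_mul _
    have hDV := donsker_varadhan (jointLaw P i) Q (hac i) hfP (hIfin i) hexpint'
    have hval : ∫ q, -η * (ℓ q - ℓ (wstar, q.2)) ∂(jointLaw P i) = -η * (A i - Lstar) := by
      rw [integral_const_mul, integral_sub (hinti i) hjw,
        integral_comp_snd (hjointsnd i) hgmeas]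
    rw [hval] at hDV
    have := hcc
    have hmi : mutInfo μ P i = klReal (jointLaw P i) Q := rfl
    rw [hmi]
    linarith
  -- sum up
  have hsum : (n : ℝ) * (η / 2 * R) - ∑ i, mutInfo μ P i ≤ η * (∑ i, A i - n * Lstar) := by
    have h := Finset.sum_le_sum fun i (_ : i ∈ Finset.univ) => hper i
    rw [Finset.sum_sub_distrib, Finset.sum_const, Finset.card_univ, Fintype.card_fin,
      nsmul_eq_mul] at h
    calc (n : ℝ) * (η / 2 * R) - ∑ i, mutInfo μ P i ≤ ∑ i, η * (A i - Lstar) := h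
      _ = η * (∑ i, A i - n * Lstar) := by
          rw [← Finset.mul_sum, Finset.sum_sub_distrib, Finset.sum_const, Finset.card_univ,
            Fintype.card_fin, nsmul_eq_mul]
  -- final algebra
  rw [hgen, hempEx]
  set S : ℝ := ∑ i, A i
  set K : ℝ := ∑ i, mutInfo μ P i
  have hη : η ≠ 0 := hη0.ne'
  have hnne : (n : ℝ) ≠ 0 := hn'.ne'
  have h3 : ((n : ℝ) * (η / 2 * R) - K) * (2 / (η * n)) ≤ (η * (S - n * Lstar)) * (2 / (η * n)) :=
    mul_le_mul_of_nonneg_right hsum (by positivity)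
  have hL : ((n : ℝ) * (η / 2 * R) - K) * (2 / (η * n)) = R - 2 / (η * n) * K := by
    field_simp
  have hRt : (η * (S - (n : ℝ) * Lstar)) * (2 / (η * n)) = 2 * (1 / (n : ℝ) * S) - 2 * Lstar := by
    field_simp
  rw [hL, hRt] at h3
  linarith [hRval]
end

section
/- Let v : [0,∞) → [0,∞) be a non-decreasing function with v(ε) > 0 for all ε > 0, let 0 < c < 1, and suppose 0 < R and the (v,c)-central condition holds: for every ε ≥ 0, log ∫ exp(−v(ε)·r) d(P_W ⊗ μ) ≤ −c·v(ε)·R + v(ε)·ε. Then for every ε ≥ 0 and every η with 0 < η ≤ v(ε), gen ≤ ((1 − c)/c)·R̂ + (1/n) ∑_{i=1}^n ( I(W;Z_i)/(η·c) + ε/c ). -/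
open MeasureTheory Real

section AuxLemmas

variable {α : Type*} [MeasurableSpace α]

lemma aux_klReal_nonneg (P Q : Measure α) [IsProbabilityMeasure P] [IsProbabilityMeasure Q]
    (h : P ≪ Q) (hint : Integrable (llr P Q) P) : 0 ≤ ∫ x, llr P Q x ∂P := by
  have h1 : ∫ x, exp (- llr P Q x) ∂P ≤ 1 := by
    rw [integral_congr_ae (exp_neg_llr h)]
    calc ∫ x, (Q.rnDeriv P x).toReal ∂P
        ≤ (Q Set.univ).toReal := by
          simpa using Measure.setIntegral_toReal_rnDeriv_le (μ := Q) (ν := P)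
            (s := Set.univ) (by simp)
      _ = 1 := by simp
  have h2 : exp (∫ x, - llr P Q x ∂P) ≤ ∫ x, exp (- llr P Q x) ∂P := by
    refine ConvexOn.map_integral_le (s := Set.univ) ?_
      continuous_exp.continuousOn isClosed_univ (by simp) hint.neg ?_
    · exact convexOn_exp.subset (Set.subset_univ _) convex_univ
    · exact (integrable_congr (exp_neg_llr h)).mpr Measure.integrable_toReal_rnDeriv
  rw [integral_neg] at h2
  have := (Real.exp_le_one_iff.mp (h2.trans h1))
  linarith

/-- Donsker–Varadhan inequality. -/
lemma aux_dv (P Q : Measure α) [IsProbabilityMeasure P] [IsProbabilityMeasure Q]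
    (h : P ≪ Q) (f : α → ℝ) (hfP : Integrable f P)
    (hfQ : Integrable (fun x => exp (f x)) Q)
    (hllr : Integrable (llr P Q) P) :
    ∫ x, f x ∂P ≤ ∫ x, llr P Q x ∂P + log (∫ x, exp (f x) ∂Q) := by
  haveI : NeZero Q := ⟨IsProbabilityMeasure.ne_zero Q⟩
  haveI : IsProbabilityMeasure (Q.tilted f) := isProbabilityMeasure_tilted hfQ
  have hPt : P ≪ Q.tilted f := h.trans (absolutelyContinuous_tilted hfQ)
  have hIt : Integrable (llr P (Q.tilted f)) P := integrable_llr_tilted_right h hfP hllr hfQ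
  have h0 : 0 ≤ ∫ x, llr P (Q.tilted f) x ∂P := aux_klReal_nonneg P (Q.tilted f) hPt hIt
  rw [integral_llr_tilted_right h hfP hfQ hllr] at h0
  linarith

lemma aux_pi_map_eval {Z : Type*} [MeasurableSpace Z] (μ : Measure Z) [IsProbabilityMeasure μ]
    (n : ℕ) (i : Fin n) :
    (Measure.pi fun _ : Fin n => μ).map (Function.eval i) = μ := by
  ext s hs
  rw [Measure.map_apply (measurable_pi_apply i) hs, Set.eval_preimage, Measure.pi_pi]
  rw [Finset.prod_eq_single i (fun j _ hj => by simp [Function.update_of_ne hj]) (by simp)]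
  simp

lemma aux_interp (Q : Measure α) [IsProbabilityMeasure Q]
    (r : α → ℝ) (hr : Measurable r) (a η : ℝ) (hη : 0 < η) (hηa : η ≤ a)
    (hint : Integrable (fun x => exp (-a * r x)) Q) :
    Integrable (fun x => exp (-η * r x)) Q ∧
      log (∫ x, exp (-η * r x) ∂Q) ≤ (η / a) * log (∫ x, exp (-a * r x) ∂Q) := by
  haveI : NeZero Q := ⟨IsProbabilityMeasure.ne_zero Q⟩
  have ha : 0 < a := hη.trans_le hηa
  set t : ℝ := η / a with ht
  have ht0 : 0 ≤ t := le_of_lt (div_pos hη ha)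
  have ht1 : t ≤ 1 := (div_le_one ha).mpr hηa
  have heq : ∀ x, exp (-η * r x) = (exp (-a * r x)) ^ t := by
    intro x
    rw [← Real.exp_mul]
    congr 1
    rw [ht]; field_simp
  have hintη : Integrable (fun x => exp (-η * r x)) Q := by
    refine Integrable.mono' ((integrable_const 1).add hint)
      ((hr.const_mul (-η)).exp.aestronglyMeasurable) (ae_of_all _ fun x => ?_)
    rw [Real.norm_eq_abs, abs_of_pos (exp_pos _)]; simp only [Pi.add_apply]
    rcases le_or_gt 0 (r x) with h | h
    · have : exp (-η * r x) ≤ 1 := by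
        rw [Real.exp_le_one_iff]
        nlinarith
      nlinarith [exp_pos (-a * r x)]
    · have : exp (-η * r x) ≤ exp (-a * r x) := by
        apply Real.exp_le_exp.mpr
        nlinarith
      nlinarith
  refine ⟨hintη, ?_⟩
  have hJ : ∫ x, exp (-η * r x) ∂Q ≤ (∫ x, exp (-a * r x) ∂Q) ^ t := by
    have := ConcaveOn.le_map_integral (μ := Q) (s := Set.Ici (0:ℝ))
      (g := fun x : ℝ => x ^ t) (f := fun x => exp (-a * r x))
      (Real.concaveOn_rpow ht0 ht1)
      (Real.continuous_rpow_const ht0).continuousOn isClosed_Ici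
      (ae_of_all _ fun x => le_of_lt (exp_pos _)) hint ?_
    · calc ∫ x, exp (-η * r x) ∂Q = ∫ x, (exp (-a * r x)) ^ t ∂Q := by
            simp_rw [heq]
        _ ≤ _ := this
    · simp only [Function.comp_def]
      exact (integrable_congr (ae_of_all _ fun x => (heq x).symm)).mpr hintη
  have hpos : 0 < ∫ x, exp (-η * r x) ∂Q := integral_exp_pos hintη
  have hpos' : 0 < ∫ x, exp (-a * r x) ∂Q := integral_exp_pos hint
  calc log (∫ x, exp (-η * r x) ∂Q) ≤ log ((∫ x, exp (-a * r x) ∂Q) ^ t) :=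
        Real.log_le_log hpos hJ
    _ = t * log (∫ x, exp (-a * r x) ∂Q) := Real.log_rpow hpos' _

end AuxLemmas

variable {W Z : Type*} [MeasurableSpace W] [MeasurableSpace Z]

theorem v_c_central_intermediate
    (μ : Measure Z) [IsProbabilityMeasure μ] (n : ℕ) (hn : 0 < n)
    (P : Measure (W × (Fin n → Z))) [IsProbabilityMeasure P]
    (hmarg : P.map Prod.snd = Measure.pi fun _ : Fin n => μ)
    (ℓ : W × Z → ℝ) (hℓ : Measurable ℓ) (wstar : W)
    (hint : Integrable ℓ ((P.map Prod.fst).prod μ))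
    (hinti : ∀ i : Fin n, Integrable ℓ (jointLaw P i))
    (hintw : Integrable (fun z => ℓ (wstar, z)) μ)
    (hac : ∀ i : Fin n, jointLaw P i ≪ (P.map Prod.fst).prod μ)
    (hIfin : ∀ i : Fin n, Integrable (llr (jointLaw P i) ((P.map Prod.fst).prod μ))
      (jointLaw P i))
    (v : ℝ → ℝ) (hv0 : ∀ ε : ℝ, 0 ≤ ε → 0 ≤ v ε)
    (hvmono : ∀ ε₁ ε₂ : ℝ, 0 ≤ ε₁ → ε₁ ≤ ε₂ → v ε₁ ≤ v ε₂)
    (hvpos : ∀ ε : ℝ, 0 < ε → 0 < v ε)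
    (c : ℝ) (hc : 0 < c) (hc1 : c < 1)
    (hR : 0 < excessRisk μ P ℓ wstar)
    (hmgfInt : ∀ ε : ℝ, 0 ≤ ε →
      Integrable (fun p => Real.exp (-(v ε) * (ℓ p - ℓ (wstar, p.2))))
        ((P.map Prod.fst).prod μ))
    (hcentral : ∀ ε : ℝ, 0 ≤ ε →
      Real.log (∫ p, Real.exp (-(v ε) * (ℓ p - ℓ (wstar, p.2)))
          ∂((P.map Prod.fst).prod μ)) ≤
        -c * v ε * excessRisk μ P ℓ wstar + v ε * ε) :
    ∀ ε : ℝ, 0 ≤ ε → ∀ η : ℝ, 0 < η → η ≤ v ε →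
      genErr μ n P ℓ ≤
        ((1 - c) / c) * empExcess n P ℓ wstar +
          (1 / (n : ℝ)) * ∑ i : Fin n, (mutInfo μ P i / (η * c) + ε / c) := by
  intro ε hε η hη hηv
  classical
  haveI hPW : IsProbabilityMeasure (P.map (Prod.fst : W × (Fin n → Z) → W)) :=
    Measure.isProbabilityMeasure_map measurable_fst.aemeasurable
  set Q : Measure (W × Z) := (P.map Prod.fst).prod μ with hQdef
  set r : W × Z → ℝ := fun p => ℓ p - ℓ (wstar, p.2) with hrdef
  have hr : Measurable r := hℓ.sub (hℓ.comp (measurable_const.prodMk measurable_snd))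
  have hφ : ∀ i : Fin n, Measurable (fun p : W × (Fin n → Z) => (p.1, p.2 i)) :=
    fun i => measurable_fst.prodMk ((measurable_pi_apply i).comp measurable_snd)
  have hPiprob : ∀ i, IsProbabilityMeasure (jointLaw P i) := fun i =>
    Measure.isProbabilityMeasure_map (hφ i).aemeasurable
  -- marginals
  have hQsnd : Q.map Prod.snd = μ := by
    rw [hQdef, Measure.map_snd_prod]; simp
  have hPisnd : ∀ i, (jointLaw P i).map Prod.snd = μ := by
    intro i
    rw [jointLaw, Measure.map_map measurable_snd (hφ i)]
    have h : (Prod.snd ∘ fun p : W × (Fin n → Z) => (p.1, p.2 i)) =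
        (Function.eval i) ∘ (Prod.snd : W × (Fin n → Z) → Fin n → Z) := rfl
    rw [h, ← Measure.map_map (measurable_pi_apply i) measurable_snd, hmarg,
      aux_pi_map_eval μ n i]
  -- integrability of the reference loss
  have hgm : Measurable (fun z => ℓ (wstar, z)) := hℓ.comp measurable_prodMk_left
  have hstar : ∀ (ν : Measure (W × Z)), ν.map Prod.snd = μ →
      Integrable (fun p : W × Z => ℓ (wstar, p.2)) ν := by
    intro ν hν
    have h : Integrable (fun z => ℓ (wstar, z)) (ν.map Prod.snd) := hν ▸ hintw
    exact (integrable_map_measure (hν ▸ hgm.aestronglyMeasurable)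
      measurable_snd.aemeasurable).mp h
  have hstar_int : ∀ (ν : Measure (W × Z)), ν.map Prod.snd = μ →
      ∫ p, ℓ (wstar, p.2) ∂ν = ∫ z, ℓ (wstar, z) ∂μ := by
    intro ν hν
    rw [← hν, integral_map measurable_snd.aemeasurable (hν ▸ hgm.aestronglyMeasurable)]
  have hr_Q : Integrable r Q := hint.sub (hstar Q hQsnd)
  have hr_Pi : ∀ i, Integrable r (jointLaw P i) := fun i => (hinti i).sub (hstar _ (hPisnd i))
  -- pull back integrals along the maps φ i
  have hℓP : ∀ i, Integrable (fun p : W × (Fin n → Z) => ℓ (p.1, p.2 i)) P := fun i =>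
    (integrable_map_measure hℓ.aestronglyMeasurable (hφ i).aemeasurable).mp (hinti i)
  have hℓPi_int : ∀ i, ∫ p, ℓ (p.1, p.2 i) ∂P = ∫ q, ℓ q ∂(jointLaw P i) := fun i =>
    (integral_map (hφ i).aemeasurable hℓ.aestronglyMeasurable).symm
  have hrP : ∀ i, Integrable (fun p : W × (Fin n → Z) => r (p.1, p.2 i)) P := fun i =>
    (integrable_map_measure hr.aestronglyMeasurable (hφ i).aemeasurable).mp (hr_Pi i)
  have hrPi_int : ∀ i, ∫ p, r (p.1, p.2 i) ∂P = ∫ q, r q ∂(jointLaw P i) := fun i =>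
    (integral_map (hφ i).aemeasurable hr.aestronglyMeasurable).symm
  -- genErr identity
  have hpopW : Integrable (popRisk μ ℓ) (P.map Prod.fst) := hint.integral_prod_left
  have hpopP : Integrable (fun p : W × (Fin n → Z) => popRisk μ ℓ p.1) P :=
    (integrable_map_measure hpopW.1 measurable_fst.aemeasurable).mp hpopW
  have hpop_val : ∫ p, popRisk μ ℓ p.1 ∂P = ∫ q, ℓ q ∂Q := by
    calc ∫ p, popRisk μ ℓ p.1 ∂P = ∫ w, popRisk μ ℓ w ∂(P.map Prod.fst) :=
          (integral_map measurable_fst.aemeasurable hpopW.1).symm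
      _ = ∫ q, ℓ q ∂Q := by
          rw [hQdef, integral_prod _ hint]; rfl
  have hempP : Integrable (fun p : W × (Fin n → Z) => empRisk n ℓ p.1 p.2) P := by
    simp only [empRisk]
    exact (integrable_finset_sum _ (fun i _ => hℓP i)).const_mul _
  have hemp_val : ∫ p, empRisk n ℓ p.1 p.2 ∂P
      = (1/(n:ℝ)) * ∑ i, ∫ q, ℓ q ∂(jointLaw P i) := by
    simp only [empRisk]
    rw [integral_const_mul, integral_finset_sum _ (fun i _ => hℓP i)]
    congr 1
    exact Finset.sum_congr rfl fun i _ => hℓPi_int i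
  have hgen : genErr μ n P ℓ
      = ∫ q, ℓ q ∂Q - (1/(n:ℝ)) * ∑ i, ∫ q, ℓ q ∂(jointLaw P i) := by
    rw [genErr, integral_sub hpopP hempP, hpop_val, hemp_val]
  -- empExcess identity
  have hempEx : empExcess n P ℓ wstar = (1/(n:ℝ)) * ∑ i, ∫ q, r q ∂(jointLaw P i) := by
    rw [empExcess]
    have h : ∀ p : W × (Fin n → Z), empRisk n ℓ p.1 p.2 - empRisk n ℓ wstar p.2
        = (1/(n:ℝ)) * ∑ i, r (p.1, p.2 i) := by
      intro p; simp only [empRisk, hrdef]; rw [← mul_sub, ← Finset.sum_sub_distrib]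
    simp_rw [h]
    rw [integral_const_mul, integral_finset_sum _ (fun i _ => hrP i)]
    congr 1
    exact Finset.sum_congr rfl fun i _ => hrPi_int i
  -- abbreviations
  set R : ℝ := excessRisk μ P ℓ wstar with hRdef
  set Lstar : ℝ := ∫ z, ℓ (wstar, z) ∂μ with hLdef
  have hR_val : R = ∫ q, ℓ q ∂Q - Lstar := by
    rw [hRdef, excessRisk, integral_sub hint (hstar Q hQsnd), hstar_int Q hQsnd]
  have hr_val : ∀ i, ∫ q, r q ∂(jointLaw P i) = ∫ q, ℓ q ∂(jointLaw P i) - Lstar := by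
    intro i
    rw [hrdef]
    rw [integral_sub (hinti i) (hstar _ (hPisnd i)), hstar_int _ (hPisnd i)]
  -- log-mgf bound at level η
  obtain ⟨hmgfη, hlogη⟩ := aux_interp Q r hr (v ε) η hη hηv (hmgfInt ε hε)
  have hva : (0:ℝ) < v ε := hη.trans_le hηv
  have hlogη' : log (∫ x, exp (-η * r x) ∂Q) ≤ -c * η * R + η * ε := by
    have ht : (η / v ε) * (-c * v ε * R + v ε * ε) = -c * η * R + η * ε := by
      field_simp
    calc log (∫ x, exp (-η * r x) ∂Q)
        ≤ (η / v ε) * log (∫ x, exp (-(v ε) * r x) ∂Q) := hlogη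
      _ ≤ (η / v ε) * (-c * v ε * R + v ε * ε) := by
          refine mul_le_mul_of_nonneg_left ?_ (by positivity)
          exact hcentral ε hε
      _ = -c * η * R + η * ε := ht
  -- Donsker–Varadhan per coordinate
  have hkey : ∀ i : Fin n,
      c * R ≤ (∫ q, r q ∂(jointLaw P i)) + (mutInfo μ P i / η + ε) := by
    intro i
    haveI := hPiprob i
    have hdv := aux_dv (jointLaw P i) Q (hac i) (fun q => -η * r q)
      ((hr_Pi i).const_mul (-η)) hmgfη (hIfin i)
    rw [integral_const_mul] at hdv
    have hmi : ∫ x, llr (jointLaw P i) Q x ∂(jointLaw P i) = mutInfo μ P i := rfl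
    rw [hmi] at hdv
    have hI : η * (mutInfo μ P i / η) = mutInfo μ P i := mul_div_cancel₀ _ (ne_of_gt hη)
    nlinarith [hdv, hlogη', hη]
  -- sum over coordinates
  have hn' : (0:ℝ) < n := Nat.cast_pos.mpr hn
  have hsum : (n:ℝ) * (c * R)
      ≤ (∑ i, ∫ q, r q ∂(jointLaw P i)) + ∑ i, (mutInfo μ P i / η + ε) := by
    have h1 : (n:ℝ) * (c * R) = ∑ _i : Fin n, (c * R) := by
      rw [Finset.sum_const, Finset.card_univ, Fintype.card_fin, nsmul_eq_mul]
    rw [h1, ← Finset.sum_add_distrib]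
    exact Finset.sum_le_sum fun i _ => hkey i
  have hcR : c * R ≤ empExcess n P ℓ wstar + (1/(n:ℝ)) * ∑ i, (mutInfo μ P i / η + ε) := by
    rw [hempEx]
    have h2 := mul_le_mul_of_nonneg_left hsum (le_of_lt (one_div_pos.mpr hn'))
    rw [mul_add] at h2
    have h3 : (1/(n:ℝ)) * ((n:ℝ) * (c * R)) = c * R := by field_simp
    linarith
  -- gen = R - empExcess
  have hgenR : genErr μ n P ℓ = R - empExcess n P ℓ wstar := by
    rw [hgen, hempEx, hR_val]
    have h4 : ∑ i, ∫ q, r q ∂(jointLaw P i)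
        = (∑ i, ∫ q, ℓ q ∂(jointLaw P i)) - (n:ℝ) * Lstar := by
      rw [Finset.sum_congr rfl fun i _ => hr_val i, Finset.sum_sub_distrib,
        Finset.sum_const, Finset.card_univ, Fintype.card_fin, nsmul_eq_mul]
    rw [h4]
    field_simp
    ring
  -- conclusion
  have hsum_c : ∑ i, (mutInfo μ P i / (η * c) + ε / c)
      = (1/c) * ∑ i, (mutInfo μ P i / η + ε) := by
    rw [Finset.mul_sum]
    refine Finset.sum_congr rfl fun i _ => ?_
    field_simp
  rw [hgenR, hsum_c]
  set S : ℝ := (1/(n:ℝ)) * ∑ i, (mutInfo μ P i / η + ε) with hSdef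
  set Rh : ℝ := empExcess n P ℓ wstar with hRhdef
  have hS : (1/(n:ℝ)) * ((1/c) * ∑ i, (mutInfo μ P i / η + ε)) = (1/c) * S := by
    rw [hSdef]; ring
  rw [hS]
  have h2 : R ≤ (Rh + S) / c := by
    rw [le_div_iff₀ hc]
    nlinarith [hcR]
  calc R - Rh ≤ (Rh + S)/c - Rh := by linarith
    _ = ((1-c)/c) * Rh + (1/c) * S := by field_simp; ring
end
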